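/- Let H(z) = ₂F₁([1/3, 2/3], [1]; z) = Σ_{n≥0} ((1/3)_n (2/3)_n / (n!)^2) z^n as a formal power series, and let A(x) = 27x^2/(1-2x)^3 and B(x) = 27x/(1+4x)^3, both regarded as elements of x·Q[[x]]. Then (1/(1-2x))·H(A(x)) = (1/(1+4x))·H(B(x)) as formal power series in Q[[x]]. -/

import Mathlib

open PowerSeries

/-- Formal composition `f ∘ g` of power series, valid when `g` has zero constant
term (coefficients of `gᵏ` for `k > n` do not contribute to the coefficient of
`xⁿ` in that case). -/
noncomputable def psComp (f g : ℚ⟦X⟧) : ℚ⟦X⟧ :=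
  PowerSeries.mk fun n =>
    ∑ k ∈ Finset.range (n + 1), coeff k f * coeff n (g ^ k)

/-- The hypergeometric series `₂F₁([1/3,2/3],[1]; z) = Σ (1/3)ₙ(2/3)ₙ/(n!)² zⁿ`. -/
noncomputable def hyp2F1 : ℚ⟦X⟧ :=
  PowerSeries.mk fun n =>
    (ascPochhammer ℚ n).eval (1 / 3) * (ascPochhammer ℚ n).eval (2 / 3) /
      ((n.factorial : ℚ)) ^ 2

open Finset PowerSeries
-- paste part1 content via import trick: just inline for test
noncomputable def pe (m : ℕ) (a : ℚ) : ℚ := (ascPochhammer ℚ m).eval a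
lemma pe_zero (a : ℚ) : pe 0 a = 1 := by simp [pe]
lemma pe_succ (m : ℕ) (a : ℚ) : pe (m+1) a = pe m a * (a + m) := by
  simp [pe, ascPochhammer_succ_eval]
lemma pe_succ_left (m : ℕ) (a : ℚ) : pe (m+1) a = a * pe m (a+1) := by
  simp [pe, ascPochhammer_succ_left, Polynomial.eval_comp]
lemma pe_one (a : ℚ) : pe 1 a = a := by
  rw [show (1:ℕ) = 0+1 from rfl, pe_succ, pe_zero]; simp
lemma pe_add_two (m : ℕ) (a : ℚ) : pe (m+2) a = a * (a+1) * pe m (a+2) := by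
  rw [show m+2 = (m+1)+1 from rfl, pe_succ_left, pe_succ_left]; ring_nf
lemma pe_add_two' (m : ℕ) (a : ℚ) : pe (m+2) a = a * pe m (a+1) * (a + m + 1) := by
  rw [show m+2 = (m+1)+1 from rfl, pe_succ, pe_succ_left]; push_cast; ring
lemma pe_add_two'' (m : ℕ) (a : ℚ) : pe (m+2) a = pe m a * (a + m) * (a + m + 1) := by
  rw [show m+2 = (m+1)+1 from rfl, pe_succ, pe_succ]; push_cast; ring
lemma pe_add_three (m : ℕ) (a : ℚ) : pe (m+3) a = a * (a+1) * pe m (a+2) * (a + m + 2) := by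
  rw [show m+3 = (m+2)+1 from rfl, pe_succ, pe_add_two]; push_cast; ring
lemma pe_eq_zero {m : ℕ} {a : ℚ} (i : ℕ) (hi : i < m) (ha : a + i = 0) : pe m a = 0 := by
  induction m with
  | zero => omega
  | succ m ih =>
    rw [pe_succ]
    rcases Nat.lt_succ_iff_lt_or_eq.mp hi with h | h
    · rw [ih h, zero_mul]
    · subst h; rw [ha, mul_zero]

noncomputable def ff (N k : ℕ) : ℚ :=
  pe (3*k) ((N:ℚ) - 2*k + 1) * 2^N / ((k.factorial:ℚ)^3 * 4^k)

noncomputable def gg (N k : ℕ) : ℚ :=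
  -24 * k^3 * (3*(N:ℚ)+4) * pe (3*k-2) ((N:ℚ) - 2*k + 3) * 2^N / ((k.factorial:ℚ)^3 * 4^k)

noncomputable def ff2 (N k : ℕ) : ℚ :=
  pe (3*k) ((N:ℚ) - k + 1) * (-4)^N * (-1/4 : ℚ)^k / (k.factorial:ℚ)^3

noncomputable def gg2 (N k : ℕ) : ℚ :=
  -48 * k^3 * (3*(N:ℚ)+5) * pe (3*k-2) ((N:ℚ) - k + 3) * (-4)^N * (-1/4 : ℚ)^k / (k.factorial:ℚ)^3

lemma ff_zero {N k : ℕ} (h : N < 2*k) : ff N k = 0 := by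
  have h1 : (2*k-1-N) < 3*k := by omega
  have h2 : ((N:ℚ) - 2*k + 1) + ((2*k-1-N : ℕ) : ℚ) = 0 := by
    have e : 2*k-1-N = 2*k - (N+1) := by omega
    rw [e, Nat.cast_sub (by omega)]; push_cast; ring
  rw [ff, pe_eq_zero _ h1 h2, zero_mul, zero_div]

lemma ff2_zero {N k : ℕ} (h : N < k) : ff2 N k = 0 := by
  have h1 : (k-1-N) < 3*k := by omega
  have h2 : ((N:ℚ) - k + 1) + ((k-1-N : ℕ) : ℚ) = 0 := by
    have e : k-1-N = k - (N+1) := by omega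
    rw [e, Nat.cast_sub (by omega)]; push_cast; ring
  rw [ff2, pe_eq_zero _ h1 h2, zero_mul, zero_mul, zero_div]

lemma gg_zero {N k : ℕ} (h : N + 3 ≤ 2*k) : gg N k = 0 := by
  have h1 : (2*k-3-N) < 3*k-2 := by omega
  have h2 : ((N:ℚ) - 2*k + 3) + ((2*k-3-N : ℕ) : ℚ) = 0 := by
    have e : 2*k-3-N = 2*k - (N+3) := by omega
    rw [e, Nat.cast_sub (by omega)]; push_cast; ring
  rw [gg, pe_eq_zero _ h1 h2]; ring

lemma gg2_zero {N k : ℕ} (h : N + 3 ≤ k) : gg2 N k = 0 := by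
  have h1 : (k-3-N) < 3*k-2 := by omega
  have h2 : ((N:ℚ) - k + 3) + ((k-3-N : ℕ) : ℚ) = 0 := by
    have e : k-3-N = k - (N+3) := by omega
    rw [e, Nat.cast_sub (by omega)]; push_cast; ring
  rw [gg2, pe_eq_zero _ h1 h2]; ring

lemma four_pow_ne (k : ℕ) : ((4:ℚ)^k) ≠ 0 := pow_ne_zero _ (by norm_num)
lemma fact_ne (k : ℕ) : ((k.factorial : ℚ)) ≠ 0 := Nat.cast_ne_zero.mpr k.factorial_ne_zero

lemma telescope1 (N k : ℕ) :
    gg N (k+1) - gg N k =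
      -8*((N:ℚ)+1)^2 * ff N k - (7*(N:ℚ)^2+21*N+16) * ff (N+1) k
        + ((N:ℚ)+2)^2 * ff (N+2) k := by
  rcases k with _ | j
  · -- k = 0
    simp only [ff, gg]
    norm_num [pe_zero, pe_one]
    push_cast
    ring
  · -- k = j+1
    have e1 : 3*(j+1) = (3*j+1)+2 := by ring
    have e2 : 3*(j+1)-2 = 3*j+1 := by omega
    have e3 : 3*(j+1+1)-2 = (3*j+1)+3 := by omega
    set x : ℚ := (N:ℚ)
    have hffN : ff N (j+1) = (x - 2*(j+1) + 1) * (x - 2*(j+1) + 2) * pe (3*j+1) (x - 2*(j+1) + 3)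
        * 2^N / (((j+1).factorial:ℚ)^3 * 4^(j+1)) := by
      rw [ff, e1, pe_add_two]; push_cast; simp only [x]; ring_nf
    have hffN1 : ff (N+1) (j+1) = ((x+1) - 2*(j+1) + 1) * pe (3*j+1) ((x+1) - 2*(j+1) + 2)
        * ((x+1) - 2*(j+1) + 1 + (3*j+1) + 1) * 2^(N+1) / (((j+1).factorial:ℚ)^3 * 4^(j+1)) := by
      rw [ff, e1, pe_add_two']; push_cast; simp only [x]; ring_nf
    have hffN2 : ff (N+2) (j+1) = pe (3*j+1) ((x+2) - 2*(j+1) + 1)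
        * ((x+2) - 2*(j+1) + 1 + (3*j+1)) * ((x+2) - 2*(j+1) + 1 + (3*j+1) + 1)
        * 2^(N+2) / (((j+1).factorial:ℚ)^3 * 4^(j+1)) := by
      rw [ff, e1, pe_add_two'']; push_cast; simp only [x]
    have hggk : gg N (j+1) = -24 * ((j:ℚ)+1)^3 * (3*x+4) * pe (3*j+1) (x - 2*(j+1) + 3)
        * 2^N / (((j+1).factorial:ℚ)^3 * 4^(j+1)) := by
      rw [gg, e2]; push_cast; simp only [x]
    have hggk1 : gg N (j+1+1) = -24 * ((j:ℚ)+2)^3 * (3*x+4)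
        * ((x - 2*(j+1+1) + 3) * (x - 2*(j+1+1) + 4) * pe (3*j+1) (x - 2*(j+1+1) + 5)
            * (x - 2*(j+1+1) + 3 + (3*j+1) + 2))
        * 2^N / (((j+1+1).factorial:ℚ)^3 * 4^(j+1+1)) := by
      rw [gg, e3, pe_add_three]; push_cast; simp only [x]; ring_nf
    have harg1 : x - 2*((j:ℚ)+1+1) + 5 = x - 2*((j:ℚ)+1) + 3 := by ring
    have harg2 : (x+1) - 2*(j+1) + 2 = x - 2*(j+1) + 3 := by ring
    have harg3 : (x+2) - 2*(j+1) + 1 = x - 2*(j+1) + 3 := by ring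
    rw [hffN, hffN1, hffN2, hggk, hggk1, harg1, harg2, harg3]
    set c : ℚ := pe (3*j+1) (x - 2*(j+1) + 3) with hc
    have hfac : (((j+1+1).factorial : ℚ)) = ((j:ℚ)+2) * ((j+1).factorial : ℚ) := by
      rw [Nat.factorial_succ]; push_cast; ring
    rw [hfac]
    have h4 : ((4:ℚ))^(j+1+1) = 4 * 4^(j+1) := by ring
    rw [h4]
    field_simp
    push_cast
    ring

lemma pe_add_three' (m : ℕ) (a : ℚ) :
    pe (m+3) a = a * pe m (a+1) * (a + m + 1) * (a + m + 2) := by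
  rw [show m+3 = (m+2)+1 from rfl, pe_succ, pe_add_two']; push_cast; ring

lemma telescope2 (N k : ℕ) :
    gg2 N (k+1) - gg2 N k =
      -8*((N:ℚ)+1)^2 * ff2 N k - (7*(N:ℚ)^2+21*N+16) * ff2 (N+1) k
        + ((N:ℚ)+2)^2 * ff2 (N+2) k := by
  rcases k with _ | j
  · simp only [ff2, gg2]
    norm_num [pe_zero, pe_one]
    push_cast
    ring
  · have e1 : 3*(j+1) = (3*j+1)+2 := by ring
    have e2 : 3*(j+1)-2 = 3*j+1 := by omega
    have e3 : 3*(j+1+1)-2 = (3*j+1)+3 := by omega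
    set x : ℚ := (N:ℚ)
    have hffN : ff2 N (j+1) = (x - (j+1) + 1) * (x - (j+1) + 2) * pe (3*j+1) (x - (j+1) + 3)
        * (-4)^N * (-1/4:ℚ)^(j+1) / ((j+1).factorial:ℚ)^3 := by
      rw [ff2, e1, pe_add_two]; push_cast; simp only [x]; ring_nf
    have hffN1 : ff2 (N+1) (j+1) = ((x+1) - (j+1) + 1) * pe (3*j+1) ((x+1) - (j+1) + 2)
        * ((x+1) - (j+1) + 1 + (3*j+1) + 1) * (-4)^(N+1) * (-1/4:ℚ)^(j+1)
        / ((j+1).factorial:ℚ)^3 := by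
      rw [ff2, e1, pe_add_two']; push_cast; simp only [x]; ring_nf
    have hffN2 : ff2 (N+2) (j+1) = pe (3*j+1) ((x+2) - (j+1) + 1)
        * ((x+2) - (j+1) + 1 + (3*j+1)) * ((x+2) - (j+1) + 1 + (3*j+1) + 1)
        * (-4)^(N+2) * (-1/4:ℚ)^(j+1) / ((j+1).factorial:ℚ)^3 := by
      rw [ff2, e1, pe_add_two'']; push_cast; simp only [x]
    have hggk : gg2 N (j+1) = -48 * ((j:ℚ)+1)^3 * (3*x+5) * pe (3*j+1) (x - (j+1) + 3)
        * (-4)^N * (-1/4:ℚ)^(j+1) / ((j+1).factorial:ℚ)^3 := by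
      rw [gg2, e2]; push_cast; simp only [x]
    have hggk1 : gg2 N (j+1+1) = -48 * ((j:ℚ)+2)^3 * (3*x+5)
        * ((x - (j+1+1) + 3) * pe (3*j+1) (x - (j+1+1) + 4)
            * (x - (j+1+1) + 3 + (3*j+1) + 1) * (x - (j+1+1) + 3 + (3*j+1) + 2))
        * (-4)^N * (-1/4:ℚ)^(j+1+1) / ((j+1+1).factorial:ℚ)^3 := by
      rw [gg2, e3, pe_add_three']; push_cast; simp only [x]; ring_nf
    have harg1 : x - ((j:ℚ)+1+1) + 4 = x - ((j:ℚ)+1) + 3 := by ring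
    have harg2 : (x+1) - ((j:ℚ)+1) + 2 = x - ((j:ℚ)+1) + 3 := by ring
    have harg3 : (x+2) - ((j:ℚ)+1) + 1 = x - ((j:ℚ)+1) + 3 := by ring
    rw [hffN, hffN1, hffN2, hggk, hggk1, harg1, harg2, harg3]
    have hfac : (((j+1+1).factorial : ℚ)) = ((j:ℚ)+2) * ((j+1).factorial : ℚ) := by
      rw [Nat.factorial_succ]; push_cast; ring
    rw [hfac]
    have h4 : ((-1/4:ℚ))^(j+1+1) = (-1/4) * (-1/4)^(j+1) := by ring
    rw [h4]
    field_simp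
    ring

noncomputable def Aseq (N : ℕ) : ℚ := ∑ k ∈ Finset.range (N+1), ff N k
noncomputable def Bseq (N : ℕ) : ℚ := ∑ k ∈ Finset.range (N+1), ff2 N k

lemma Aseq_ext (N M : ℕ) (h : N+1 ≤ M) : Aseq N = ∑ k ∈ Finset.range M, ff N k := by
  rw [Aseq]
  apply Finset.sum_subset (Finset.range_subset_range.mpr h)
  intro k _ hk
  rw [Finset.mem_range, not_lt] at hk
  exact ff_zero (by omega)

lemma Bseq_ext (N M : ℕ) (h : N+1 ≤ M) : Bseq N = ∑ k ∈ Finset.range M, ff2 N k := by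
  rw [Bseq]
  apply Finset.sum_subset (Finset.range_subset_range.mpr h)
  intro k _ hk
  rw [Finset.mem_range, not_lt] at hk
  exact ff2_zero (by omega)

lemma gg_zero0 (N : ℕ) : gg N 0 = 0 := by simp [gg]
lemma gg2_zero0 (N : ℕ) : gg2 N 0 = 0 := by simp [gg2]

lemma Aseq_rec (N : ℕ) :
    -8*((N:ℚ)+1)^2 * Aseq N - (7*(N:ℚ)^2+21*N+16) * Aseq (N+1)
      + ((N:ℚ)+2)^2 * Aseq (N+2) = 0 := by
  rw [Aseq_ext N (N+3) (by omega), Aseq_ext (N+1) (N+3) (by omega),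
    Aseq_ext (N+2) (N+3) (by omega), Finset.mul_sum, Finset.mul_sum, Finset.mul_sum,
    ← Finset.sum_sub_distrib, ← Finset.sum_add_distrib]
  have : ∀ k ∈ Finset.range (N+3),
      -8*((N:ℚ)+1)^2 * ff N k - (7*(N:ℚ)^2+21*N+16) * ff (N+1) k + ((N:ℚ)+2)^2 * ff (N+2) k
        = gg N (k+1) - gg N k := fun k _ => (telescope1 N k).symm
  rw [Finset.sum_congr rfl this, Finset.sum_range_sub]
  rw [gg_zero (by omega), gg_zero0, sub_zero]

lemma Bseq_rec (N : ℕ) :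
    -8*((N:ℚ)+1)^2 * Bseq N - (7*(N:ℚ)^2+21*N+16) * Bseq (N+1)
      + ((N:ℚ)+2)^2 * Bseq (N+2) = 0 := by
  rw [Bseq_ext N (N+3) (by omega), Bseq_ext (N+1) (N+3) (by omega),
    Bseq_ext (N+2) (N+3) (by omega), Finset.mul_sum, Finset.mul_sum, Finset.mul_sum,
    ← Finset.sum_sub_distrib, ← Finset.sum_add_distrib]
  have : ∀ k ∈ Finset.range (N+3),
      -8*((N:ℚ)+1)^2 * ff2 N k - (7*(N:ℚ)^2+21*N+16) * ff2 (N+1) k + ((N:ℚ)+2)^2 * ff2 (N+2) k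
        = gg2 N (k+1) - gg2 N k := fun k _ => (telescope2 N k).symm
  rw [Finset.sum_congr rfl this, Finset.sum_range_sub]
  rw [gg2_zero (by omega), gg2_zero0, sub_zero]

lemma Aseq_zero : Aseq 0 = 1 := by
  simp [Aseq, ff, pe_zero]

lemma Bseq_zero : Bseq 0 = 1 := by
  simp [Bseq, ff2, pe_zero]

lemma pe_three (a : ℚ) : pe 3 a = a * (a+1) * (a+2) := by
  rw [show (3:ℕ) = 1+2 from rfl, pe_add_two'', pe_one]; push_cast; ring

lemma Aseq_one : Aseq 1 = 2 := by
  rw [Aseq, Finset.sum_range_succ, Finset.sum_range_one]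
  norm_num [ff, pe_zero, pe_three]

lemma Bseq_one : Bseq 1 = 2 := by
  rw [Bseq, Finset.sum_range_succ, Finset.sum_range_one]
  norm_num [ff2, pe_zero, pe_three]

lemma Aseq_eq_Bseq (N : ℕ) : Aseq N = Bseq N := by
  have key : ∀ n, Aseq n = Bseq n ∧ Aseq (n+1) = Bseq (n+1) := by
    intro n
    induction n with
    | zero => exact ⟨Aseq_zero.trans Bseq_zero.symm, Aseq_one.trans Bseq_one.symm⟩
    | succ m ih =>
      refine ⟨ih.2, ?_⟩
      have h1 := Aseq_rec m
      have h2 := Bseq_rec m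
      have hne : ((m:ℚ)+2)^2 ≠ 0 := by positivity
      have h3 : ((m:ℚ)+2)^2 * Aseq (m+2) = ((m:ℚ)+2)^2 * Bseq (m+2) := by
        linear_combination h1 - h2 + 8*((m:ℚ)+1)^2 * ih.1
          + (7*(m:ℚ)^2+21*(m:ℚ)+16) * ih.2
      exact mul_left_cancel₀ hne h3
  exact (key N).1

lemma coeff_one_sub_C_mul_X (c : ℚ) (n : ℕ) :
    coeff n (1 - C c * X) = if n = 0 then 1 else if n = 1 then -c else 0 := by
  rw [map_sub, coeff_C_mul]
  rcases n with _ | _ | n <;> simp [coeff_X, coeff_one]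

lemma inv_one_sub_C_mul_X (c : ℚ) :
    (1 - C c * X : ℚ⟦X⟧)⁻¹ = mk fun n => c^n := by
  have hc : constantCoeff (1 - C c * X : ℚ⟦X⟧) ≠ 0 := by
    simp [map_sub, constantCoeff_X]
  rw [eq_comm, PowerSeries.eq_inv_iff_mul_eq_one hc]
  ext n
  rw [coeff_mul, Finset.Nat.sum_antidiagonal_eq_sum_range_succ_mk]
  rcases n with _ | n
  · simp [coeff_one_sub_C_mul_X]
  · rw [Finset.sum_range_succ, Finset.sum_range_succ]
    have h0 : ∀ i ∈ Finset.range n, (coeff i (mk fun m => c^m)) *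
        coeff (n+1-i) (1 - C c * X) = 0 := by
      intro i hi
      rw [Finset.mem_range] at hi
      rw [coeff_one_sub_C_mul_X, if_neg (by omega), if_neg (by omega), mul_zero]
    rw [Finset.sum_eq_zero h0]
    simp [coeff_one_sub_C_mul_X, coeff_mk, pow_succ]

lemma inv_pow_one_sub_C_mul_X (c : ℚ) (m : ℕ) :
    ((1 - C c * X : ℚ⟦X⟧)⁻¹)^(m+1) = mk fun n => ((n+m).choose m : ℚ) * c^n := by
  induction m with
  | zero => rw [pow_one, inv_one_sub_C_mul_X]; simp
  | succ m ih =>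
    rw [pow_succ, ih, inv_one_sub_C_mul_X]
    ext n
    rw [coeff_mul, Finset.Nat.sum_antidiagonal_eq_sum_range_succ_mk, coeff_mk]
    have hterm : ∀ i ∈ Finset.range (n+1),
        (coeff i (mk fun j => ((j+m).choose m : ℚ) * c^j)) * coeff (n-i) (mk fun j => c^j)
          = ((i+m).choose m : ℚ) * c^n := by
      intro i hi
      rw [Finset.mem_range] at hi
      rw [coeff_mk, coeff_mk, mul_assoc, ← pow_add]
      congr 2
      omega
    rw [Finset.sum_congr rfl hterm, ← Finset.sum_mul, ← Nat.cast_sum,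
      Nat.sum_range_add_choose n m]
    norm_num
    left
    congr 1


lemma hyp_coeff (k : ℕ) :
    (ascPochhammer ℚ k).eval (1/3) * (ascPochhammer ℚ k).eval (2/3) * 27^k
      * (k.factorial : ℚ) = ((3*k).factorial : ℚ) := by
  induction k with
  | zero => simp
  | succ k ih =>
    have h3 : 3*(k+1) = (3*k+1)+1+1 := by ring
    rw [h3, Nat.factorial_succ, Nat.factorial_succ, Nat.factorial_succ, Nat.factorial_succ,
      ascPochhammer_succ_eval, ascPochhammer_succ_eval]
    push_cast
    linear_combination (27*((1:ℚ)/3+k)*(2/3+k)*(k+1)) * ih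

lemma pe_choose (a m : ℕ) : pe m ((a:ℚ)+1) = ((m.factorial : ℚ)) * (((a+m).choose m : ℚ)) := by
  have h1 : ((a:ℚ)+1) = (((a+1 : ℕ)):ℚ) := by push_cast; ring
  rw [pe, h1, ← Nat.cast_ascFactorial, Nat.ascFactorial_eq_factorial_mul_choose]
  push_cast
  ring

lemma coeff_mul_psComp (u f g : ℚ⟦X⟧) (hg : ∀ k j : ℕ, j < k → (coeff j) (g^k) = 0) (N : ℕ) :
    coeff N (u * psComp f g) = ∑ k ∈ Finset.range (N+1),
      coeff k f * coeff N (u * g^k) := by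
  rw [coeff_mul]
  have h1 : ∀ p ∈ Finset.HasAntidiagonal.antidiagonal N, coeff p.1 u * coeff p.2 (psComp f g)
      = ∑ k ∈ Finset.range (N+1), coeff p.1 u * (coeff k f * coeff p.2 (g^k)) := by
    intro p hp
    rw [Finset.HasAntidiagonal.mem_antidiagonal] at hp
    rw [psComp, coeff_mk, Finset.mul_sum]
    apply Finset.sum_subset (Finset.range_subset_range.mpr (by omega))
    intro k _ hk
    rw [Finset.mem_range, not_lt] at hk
    rw [hg k p.2 (by omega), mul_zero, mul_zero]
  rw [Finset.sum_congr rfl h1, Finset.sum_comm]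
  apply Finset.sum_congr rfl
  intro k _
  rw [coeff_mul, Finset.mul_sum]
  apply Finset.sum_congr rfl
  intro p _
  ring

lemma coeff_lhs (N : ℕ) :
    coeff N ((1 - 2*X : ℚ⟦X⟧)⁻¹ * psComp hyp2F1 (27 * X^2 * ((1 - 2*X : ℚ⟦X⟧)⁻¹)^3))
      = Aseq N := by
  have h2X : (1 - 2*X : ℚ⟦X⟧) = 1 - C 2 * X := by rw [map_ofNat (C) 2]
  have h27 : (27 : ℚ⟦X⟧) = C 27 := (map_ofNat (C) 27).symm
  have hmon : ∀ k : ℕ, (1 - 2*X : ℚ⟦X⟧)⁻¹ * (27 * X^2 * ((1 - 2*X : ℚ⟦X⟧)⁻¹)^3)^k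
      = C (27^k) * (X^(2*k) * ((1 - C 2 * X : ℚ⟦X⟧)⁻¹)^(3*k+1)) := by
    intro k
    rw [h27, h2X, map_pow]
    ring
  have hg0 : ∀ k j : ℕ, j < k → coeff j ((27 * X^2 * ((1 - 2*X:ℚ⟦X⟧)⁻¹)^3)^k) = 0 := by
    intro k j hjk
    have hm : (27 * X^2 * ((1 - 2*X:ℚ⟦X⟧)⁻¹)^3)^k
        = C (27^k) * (X^(2*k) * ((1 - C 2*X:ℚ⟦X⟧)⁻¹)^(3*k)) := by
      rw [h27, h2X, map_pow]; ring
    rw [hm, coeff_C_mul, coeff_X_pow_mul', if_neg (by omega), mul_zero]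
  rw [coeff_mul_psComp _ _ _ hg0, Aseq]
  apply Finset.sum_congr rfl
  intro k hk
  rw [Finset.mem_range] at hk
  rw [hmon, coeff_C_mul, coeff_X_pow_mul', inv_pow_one_sub_C_mul_X, coeff_mk,
    hyp2F1, coeff_mk]
  have h27k : ((27:ℚ))^k ≠ 0 := pow_ne_zero _ (by norm_num)
  have hee : (ascPochhammer ℚ k).eval (1/3 : ℚ) * (ascPochhammer ℚ k).eval (2/3 : ℚ)
      = ((3*k).factorial : ℚ) / (27^k * (k.factorial:ℚ)) := by
    rw [eq_div_iff (mul_ne_zero h27k (fact_ne k))]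
    linear_combination hyp_coeff k
  by_cases h : 2*k ≤ N
  · rw [if_pos h]
    have hb : pe (3*k) ((N:ℚ) - 2*k + 1)
        = (((3*k).factorial : ℚ)) * (((N-2*k)+(3*k)).choose (3*k) : ℚ) := by
      have harg : (N:ℚ) - 2*k + 1 = ((N-2*k : ℕ) : ℚ) + 1 := by
        rw [Nat.cast_sub (by omega)]; push_cast; ring
      rw [harg, pe_choose]
    have hpow : (2:ℚ)^(N - 2*k) * 4^k = 2^N := by
      have h4 : (4:ℚ)^k = 2^(2*k) := by rw [pow_mul]; norm_num
      rw [h4, ← pow_add]; congr 1; omega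
    rw [ff, hb, hee, ← hpow]
    field_simp
  · rw [if_neg h, mul_zero, mul_zero, ff_zero (by omega)]

lemma coeff_rhs (N : ℕ) :
    coeff N ((1 + 4*X : ℚ⟦X⟧)⁻¹ * psComp hyp2F1 (27 * X * ((1 + 4*X : ℚ⟦X⟧)⁻¹)^3))
      = Bseq N := by
  have h4X : (1 + 4*X : ℚ⟦X⟧) = 1 - C (-4) * X := by
    rw [map_neg, map_ofNat (C) 4]; ring
  have h27 : (27 : ℚ⟦X⟧) = C 27 := (map_ofNat (C) 27).symm
  have hmon : ∀ k : ℕ, (1 + 4*X : ℚ⟦X⟧)⁻¹ * (27 * X * ((1 + 4*X : ℚ⟦X⟧)⁻¹)^3)^k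
      = C (27^k) * (X^k * ((1 - C (-4) * X : ℚ⟦X⟧)⁻¹)^(3*k+1)) := by
    intro k
    rw [h27, h4X, map_pow]
    ring
  have hg0 : ∀ k j : ℕ, j < k → coeff j ((27 * X * ((1 + 4*X:ℚ⟦X⟧)⁻¹)^3)^k) = 0 := by
    intro k j hjk
    have hm : (27 * X * ((1 + 4*X:ℚ⟦X⟧)⁻¹)^3)^k
        = C (27^k) * (X^k * ((1 - C (-4)*X:ℚ⟦X⟧)⁻¹)^(3*k)) := by
      rw [h27, h4X, map_pow]; ring
    rw [hm, coeff_C_mul, coeff_X_pow_mul', if_neg (by omega), mul_zero]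
  rw [coeff_mul_psComp _ _ _ hg0, Bseq]
  apply Finset.sum_congr rfl
  intro k hk
  rw [Finset.mem_range] at hk
  rw [hmon, coeff_C_mul, coeff_X_pow_mul', inv_pow_one_sub_C_mul_X, coeff_mk,
    hyp2F1, coeff_mk]
  have h27k : ((27:ℚ))^k ≠ 0 := pow_ne_zero _ (by norm_num)
  have hee : (ascPochhammer ℚ k).eval (1/3 : ℚ) * (ascPochhammer ℚ k).eval (2/3 : ℚ)
      = ((3*k).factorial : ℚ) / (27^k * (k.factorial:ℚ)) := by
    rw [eq_div_iff (mul_ne_zero h27k (fact_ne k))]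
    linear_combination hyp_coeff k
  have h : k ≤ N := by omega
  rw [if_pos h]
  have hb : pe (3*k) ((N:ℚ) - k + 1)
      = (((3*k).factorial : ℚ)) * (((N-k)+(3*k)).choose (3*k) : ℚ) := by
    have harg : (N:ℚ) - k + 1 = ((N-k : ℕ) : ℚ) + 1 := by
      rw [Nat.cast_sub (by omega)]
    rw [harg, pe_choose]
  have hpow2 : ((-4:ℚ))^(N-k) * (-4)^k = (-4)^N := by
    rw [← pow_add]; congr 1; omega
  have hcomb : ((-4:ℚ))^N * (-1/4)^k = (-4)^(N-k) := by
    rw [← hpow2, mul_assoc, ← mul_pow]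
    norm_num
  rw [ff2, hb, hee, ← hcomb]
  field_simp

/-- With pullbacks `A(x) = 27x²/(1-2x)³` and `B(x) = 27x/(1+4x)³`, one has the
identity `H(A(x))/(1-2x) = H(B(x))/(1+4x)` for `H = ₂F₁([1/3,2/3],[1]; ·)`. -/
theorem hyp2F1_pullback_identity :
    let A : ℚ⟦X⟧ := 27 * X ^ 2 * ((1 - 2 * X)⁻¹) ^ 3
    let B : ℚ⟦X⟧ := 27 * X * ((1 + 4 * X)⁻¹) ^ 3
    (1 - 2 * X)⁻¹ * psComp hyp2F1 A = (1 + 4 * X)⁻¹ * psComp hyp2F1 B := by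
  intro A B
  show (1 - 2*X : ℚ⟦X⟧)⁻¹ * psComp hyp2F1 (27 * X^2 * ((1 - 2*X : ℚ⟦X⟧)⁻¹)^3)
    = (1 + 4*X : ℚ⟦X⟧)⁻¹ * psComp hyp2F1 (27 * X * ((1 + 4*X : ℚ⟦X⟧)⁻¹)^3)
  ext N
  rw [coeff_lhs, coeff_rhs, Aseq_eq_Bseq]
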